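/- Let f : ℝ → ℝ be measurable, log-concave, and integrable on (−∞, z) for every z ∈ ℝ. Define F(z) = ∫_{(−∞,z)} f(s) ds (integral with respect to Lebesgue measure). Then F is log-concave, i.e. F((1−t)·x + t·y) ≥ F(x)^{1−t} · F(y)^t for all x, y ∈ ℝ and t ∈ [0,1]. -/

import Mathlib

open MeasureTheory Real Filter

section Aux

variable (f : ℝ → ℝ)

lemma shift_integral (c u : ℝ) :
    (∫ s in Set.Iio u, f (s + c)) = ∫ s in Set.Iio (u + c), f s := by
  have h₁ : MeasurePreserving (· + c) (volume : Measure ℝ) volume :=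
    measurePreserving_add_right volume c
  have h₂ : MeasurableEmbedding (· + c : ℝ → ℝ) :=
    (MeasurableEquiv.addRight c).measurableEmbedding
  have := h₁.setIntegral_preimage_emb h₂ f (Set.Iio (u + c))
  have hpre : (· + c) ⁻¹' (Set.Iio (u + c)) = Set.Iio u := by
    ext s; simp
  rwa [hpre] at this

lemma shift_integrable (c u : ℝ) (h : IntegrableOn f (Set.Iio (u + c))) :
    IntegrableOn (fun s => f (s + c)) (Set.Iio u) := by
  have h₁ : MeasurePreserving (· + c) (volume : Measure ℝ) volume :=
    measurePreserving_add_right volume c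
  have h₂ : MeasurableEmbedding (· + c : ℝ → ℝ) :=
    (MeasurableEquiv.addRight c).measurableEmbedding
  have := (h₁.integrableOn_comp_preimage h₂ (s := Set.Iio (u + c)) (f := f)).2 h
  have hpre : (· + c) ⁻¹' (Set.Iio (u + c)) = Set.Iio u := by
    ext s; simp
  rwa [hpre] at this

end Aux

section Main

variable {f : ℝ → ℝ}

/-- product form of log-concavity -/
lemma lemA (hnonneg : ∀ x, 0 ≤ f x)
    (hlc : ∀ x y t : ℝ, 0 ≤ t → t ≤ 1 →
      f x ^ (1 - t) * f y ^ t ≤ f ((1 - t) * x + t * y))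
    (s u v : ℝ) (hsu : s ≤ u) (huv : u ≤ v) :
    f s * f v ≤ f u * f (s + v - u) := by
  rcases eq_or_lt_of_le hsu with rfl | hsu'
  · have h : s + v - s = v := by ring
    rw [h]
  rcases (hnonneg s).lt_or_eq with hs | hs
  swap
  · rw [← hs, zero_mul]; exact mul_nonneg (hnonneg _) (hnonneg _)
  rcases (hnonneg v).lt_or_eq with hv | hv
  swap
  · rw [← hv, mul_zero]; exact mul_nonneg (hnonneg _) (hnonneg _)
  have hsv : s < v := lt_of_lt_of_le hsu' huv
  set l : ℝ := (u - s) / (v - s) with hl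
  have hvs : (0:ℝ) < v - s := by linarith
  have hl0 : 0 ≤ l := div_nonneg (by linarith) hvs.le
  have hl1 : l ≤ 1 := by rw [div_le_one hvs]; linarith
  have h1 : f s ^ (1 - l) * f v ^ l ≤ f u := by
    have h := hlc s v l hl0 hl1
    have he : (1 - l) * s + l * v = u := by
      rw [hl]; linear_combination (div_mul_cancel₀ (u - s) hvs.ne')
    rwa [he] at h
  have h2' : f s ^ l * f v ^ (1 - l) ≤ f (s + v - u) := by
    have h := hlc s v (1 - l) (by linarith) (by linarith)
    have he : (1 - (1 - l)) * s + (1 - l) * v = s + v - u := by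
      rw [hl]; linear_combination (-1) * (div_mul_cancel₀ (u - s) hvs.ne')
    rw [he] at h
    have hll : (1 - (1 - l)) = l := by ring
    rwa [hll] at h
  calc f s * f v = (f s ^ (1 - l) * f v ^ l) * (f s ^ l * f v ^ (1 - l)) := by
        rw [mul_mul_mul_comm, ← Real.rpow_add hs, ← Real.rpow_add hv]
        norm_num
    _ ≤ f u * f (s + v - u) :=
        mul_le_mul h1 h2'
          (mul_nonneg (Real.rpow_nonneg (hnonneg _) _) (Real.rpow_nonneg (hnonneg _) _))
          (hnonneg u)

/-- ratio monotonicity: `f v * F u ≤ f u * F v` for `u ≤ v` -/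
lemma ratio (hmeas : Measurable f) (hnonneg : ∀ x, 0 ≤ f x)
    (hlc : ∀ x y t : ℝ, 0 ≤ t → t ≤ 1 →
      f x ^ (1 - t) * f y ^ t ≤ f ((1 - t) * x + t * y))
    (hint : ∀ z : ℝ, IntegrableOn f (Set.Iio z))
    (u v : ℝ) (huv : u ≤ v) :
    f v * (∫ s in Set.Iio u, f s) ≤ f u * (∫ s in Set.Iio v, f s) := by
  have hc : u + (v - u) = v := by ring
  have hshiftint : IntegrableOn (fun s => f (s + (v - u))) (Set.Iio u) :=
    shift_integrable f (v - u) u (by rw [hc]; exact hint v)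
  calc f v * (∫ s in Set.Iio u, f s) = ∫ s in Set.Iio u, f v * f s := by
        rw [integral_const_mul]
    _ ≤ ∫ s in Set.Iio u, f u * f (s + (v - u)) := by
        apply setIntegral_mono_on ((hint u).const_mul _) (hshiftint.const_mul _)
          measurableSet_Iio
        intro s hs
        have := lemA hnonneg hlc s u v (le_of_lt hs) huv
        have he : s + v - u = s + (v - u) := by ring
        rwa [he, mul_comm (f s)] at this
    _ = f u * ∫ s in Set.Iio u, f (s + (v - u)) := by rw [integral_const_mul]
    _ = f u * ∫ s in Set.Iio v, f s := by rw [shift_integral f (v - u) u, hc]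

end Main

section Growth

variable {f : ℝ → ℝ}

lemma F_mono (hnonneg : ∀ x, 0 ≤ f x) (hint : ∀ z : ℝ, IntegrableOn f (Set.Iio z))
    {u v : ℝ} (huv : u ≤ v) :
    (∫ s in Set.Iio u, f s) ≤ ∫ s in Set.Iio v, f s :=
  setIntegral_mono_set (hint v) (Filter.Eventually.of_forall fun s => hnonneg s)
    ((Set.Iio_subset_Iio huv).eventuallyLE)

lemma F_split (hint : ∀ z : ℝ, IntegrableOn f (Set.Iio z)) {a b : ℝ} (hab : a ≤ b) :
    (∫ s in Set.Iio b, f s) = (∫ s in Set.Iio a, f s) + ∫ s in Set.Ico a b, f s := by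
  rw [← setIntegral_union ?hd measurableSet_Ico ((hint b).mono_set (Set.Iio_subset_Iio hab))
      ((hint b).mono_set (Set.Ico_subset_Iio_self)), Set.Iio_union_Ico_eq_Iio hab]
  case hd =>
    rw [Set.disjoint_left]
    rintro s (hs1 : s < a) ⟨hs2, _⟩
    exact absurd hs2 (not_le.mpr hs1)

/-- one step to the left of z: `F a * (1 + ρ (b-a)) ≤ F b` for `a ≤ b ≤ z` -/
lemma step_left (hmeas : Measurable f) (hnonneg : ∀ x, 0 ≤ f x)
    (hlc : ∀ x y t : ℝ, 0 ≤ t → t ≤ 1 →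
      f x ^ (1 - t) * f y ^ t ≤ f ((1 - t) * x + t * y))
    (hint : ∀ z : ℝ, IntegrableOn f (Set.Iio z))
    {z a b : ℝ} (hab : a ≤ b) (hbz : b ≤ z)
    (hFz : 0 < ∫ s in Set.Iio z, f s) :
    (∫ s in Set.Iio a, f s) * (1 + (f z / ∫ s in Set.Iio z, f s) * (b - a))
      ≤ ∫ s in Set.Iio b, f s := by
  set Fz := ∫ s in Set.Iio z, f s
  set Fa := ∫ s in Set.Iio a, f s with hFa
  set ρ := f z / Fz with hρ
  have hbound : ∀ s ∈ Set.Ico a b, ρ * Fa ≤ f s := by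
    rintro s ⟨hs1, hs2⟩
    have h1 : f z * (∫ u in Set.Iio s, f u) ≤ f s * Fz :=
      ratio hmeas hnonneg hlc hint s z (le_of_lt (lt_of_lt_of_le hs2 hbz))
    have h2 : Fa ≤ ∫ u in Set.Iio s, f u := F_mono hnonneg hint hs1
    have h3 : f z * Fa ≤ f s * Fz :=
      le_trans (mul_le_mul_of_nonneg_left h2 (hnonneg z)) h1
    rw [hρ, div_mul_eq_mul_div, div_le_iff₀ hFz]
    calc f z * Fa ≤ f s * Fz := h3
      _ = f s * Fz := rfl
  have hub : ρ * Fa * (b - a) ≤ ∫ s in Set.Ico a b, f s := by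
    have := setIntegral_ge_of_const_le_real (μ := volume) measurableSet_Ico
      (by simp [Real.volume_Ico]) hbound ((hint b).mono_set Set.Ico_subset_Iio_self)
    rwa [Real.volume_real_Ico_of_le hab] at this
  have hs := F_split hint hab
  nlinarith [hs, hub]

/-- one step to the right of z: `F b * (1 - ρ (b-a)) ≤ F a` for `z ≤ a ≤ b` -/
lemma step_right (hmeas : Measurable f) (hnonneg : ∀ x, 0 ≤ f x)
    (hlc : ∀ x y t : ℝ, 0 ≤ t → t ≤ 1 →
      f x ^ (1 - t) * f y ^ t ≤ f ((1 - t) * x + t * y))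
    (hint : ∀ z : ℝ, IntegrableOn f (Set.Iio z))
    {z a b : ℝ} (hza : z ≤ a) (hab : a ≤ b)
    (hFz : 0 < ∫ s in Set.Iio z, f s) :
    (∫ s in Set.Iio b, f s) * (1 - (f z / ∫ s in Set.Iio z, f s) * (b - a))
      ≤ ∫ s in Set.Iio a, f s := by
  set Fz := ∫ s in Set.Iio z, f s
  set Fb := ∫ s in Set.Iio b, f s with hFb
  set ρ := f z / Fz with hρ
  have hbound : ∀ s ∈ Set.Ico a b, f s ≤ ρ * Fb := by
    rintro s ⟨hs1, hs2⟩
    have h1 : f s * Fz ≤ f z * (∫ u in Set.Iio s, f u) :=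
      ratio hmeas hnonneg hlc hint z s (le_trans hza hs1)
    have h2 : (∫ u in Set.Iio s, f u) ≤ Fb := F_mono hnonneg hint (le_of_lt hs2)
    have h3 : f s * Fz ≤ f z * Fb :=
      le_trans h1 (mul_le_mul_of_nonneg_left h2 (hnonneg z))
    rw [hρ, div_mul_eq_mul_div, le_div_iff₀ hFz]
    linarith [h3]
  have hub : (∫ s in Set.Ico a b, f s) ≤ ρ * Fb * (b - a) := by
    have hconst : IntegrableOn (fun _ : ℝ => ρ * Fb) (Set.Ico a b) volume :=
      integrableOn_const (by simp [Real.volume_Ico])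
    have := setIntegral_mono_on ((hint b).mono_set Set.Ico_subset_Iio_self) hconst
      measurableSet_Ico hbound
    rwa [setIntegral_const, Real.volume_real_Ico_of_le hab,
      smul_eq_mul, mul_comm (b - a)] at this
  have hs := F_split hint hab
  nlinarith [hs, hub]

end Growth

section Exp

variable {f : ℝ → ℝ}

/-- main growth bound: `F w * exp (ρ (z - w)) ≤ F z` -/
lemma exp_bound (hmeas : Measurable f) (hnonneg : ∀ x, 0 ≤ f x)
    (hlc : ∀ x y t : ℝ, 0 ≤ t → t ≤ 1 →
      f x ^ (1 - t) * f y ^ t ≤ f ((1 - t) * x + t * y))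
    (hint : ∀ z : ℝ, IntegrableOn f (Set.Iio z))
    {z : ℝ} (hFz : 0 < ∫ s in Set.Iio z, f s) (w : ℝ) :
    (∫ s in Set.Iio w, f s) * Real.exp ((f z / ∫ s in Set.Iio z, f s) * (z - w))
      ≤ ∫ s in Set.Iio z, f s := by
  set Fz := ∫ s in Set.Iio z, f s with hFzdef
  set Fw := ∫ s in Set.Iio w, f s with hFwdef
  set ρ := f z / Fz with hρ
  have hρ0 : 0 ≤ ρ := div_nonneg (hnonneg z) hFz.le
  set t0 := ρ * (z - w) with ht0
  have hlim : Filter.Tendsto (fun n : ℕ => Fw * (1 + t0 / n) ^ n)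
      Filter.atTop (nhds (Fw * Real.exp t0)) :=
    (Real.tendsto_one_add_div_pow_exp t0).const_mul Fw
  refine le_of_tendsto hlim ?_
  rcases le_total w z with hwz | hzw
  · -- w ≤ z : t0 ≥ 0, inequality holds for all n ≥ 1
    refine Filter.eventually_atTop.2 ⟨1, fun n hn => ?_⟩
    have hn0 : (0:ℝ) < n := by exact_mod_cast hn
    set d := (z - w) / n with hd
    have hd0 : 0 ≤ d := div_nonneg (by linarith) hn0.le
    have htd : t0 / n = ρ * d := by rw [ht0, hd]; ring
    have key : ∀ k : ℕ, k ≤ n →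
        Fw * (1 + ρ * d) ^ k ≤ ∫ s in Set.Iio (w + k * d), f s := by
      intro k
      induction k with
      | zero => intro _; simp [hFwdef]
      | succ k ih =>
        intro hk1
        have hk : k ≤ n := Nat.le_of_succ_le hk1
        have hbz : w + (k + 1 : ℕ) * d ≤ z := by
          have h1 : ((k:ℝ) + 1) * d ≤ n * d := by
            apply mul_le_mul_of_nonneg_right _ hd0
            exact_mod_cast hk1
          have h2 : (n:ℝ) * d = z - w := by
            rw [hd]; field_simp
          push_cast
          linarith
        have hstep := step_left hmeas hnonneg hlc hint
          (a := w + k * d) (b := w + (k+1:ℕ) * d) (z := z)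
          (by push_cast; linarith) hbz hFz
        have harg : (w + ((k:ℕ)+1:ℕ) * d) - (w + (k:ℕ) * d) = d := by push_cast; ring
        rw [harg] at hstep
        calc Fw * (1 + ρ * d) ^ (k+1) = (Fw * (1 + ρ * d) ^ k) * (1 + ρ * d) := by ring
          _ ≤ (∫ s in Set.Iio (w + k * d), f s) * (1 + ρ * d) := by
              apply mul_le_mul_of_nonneg_right (ih hk)
              nlinarith
          _ ≤ ∫ s in Set.Iio (w + ((k:ℕ)+1:ℕ) * d), f s := hstep
    have hkey := key n le_rfl
    have hend : w + (n:ℝ) * d = z := by rw [hd]; field_simp; ring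
    rw [hend] at hkey
    rw [htd]
    exact hkey
  · -- z ≤ w : need n large so that 1 - ρ * d ≥ 0
    refine Filter.eventually_atTop.2 ⟨⌈ρ * (w - z)⌉₊ + 1, fun n hn => ?_⟩
    have hn1 : 1 ≤ n := le_trans (Nat.le_add_left 1 _) hn
    have hn0 : (0:ℝ) < n := by exact_mod_cast hn1
    set d := (w - z) / n with hd
    have hd0 : 0 ≤ d := div_nonneg (by linarith) hn0.le
    have htd : 1 + t0 / n = 1 - ρ * d := by rw [ht0, hd]; ring
    have hρd : ρ * d ≤ 1 := by
      have h1 : ρ * (w - z) ≤ n := by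
        have ha := Nat.le_ceil (ρ * (w - z))
        have hb : (⌈ρ * (w - z)⌉₊ : ℝ) ≤ n := by exact_mod_cast Nat.le_of_succ_le hn
        linarith
      rw [hd, mul_div_assoc']
      exact div_le_one_of_le₀ h1 hn0.le
    have key : ∀ k : ℕ, k ≤ n →
        Fw * (1 - ρ * d) ^ k ≤ ∫ s in Set.Iio (w - k * d), f s := by
      intro k
      induction k with
      | zero => intro _; simp [hFwdef]
      | succ k ih =>
        intro hk1
        have hk : k ≤ n := Nat.le_of_succ_le hk1
        have hza : z ≤ w - (k + 1 : ℕ) * d := by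
          have h1 : ((k:ℝ) + 1) * d ≤ n * d := by
            apply mul_le_mul_of_nonneg_right _ hd0
            exact_mod_cast hk1
          have h2 : (n:ℝ) * d = w - z := by rw [hd]; field_simp
          push_cast
          linarith
        have hstep := step_right hmeas hnonneg hlc hint
          (a := w - (k+1:ℕ) * d) (b := w - k * d) (z := z)
          hza (by push_cast; linarith) hFz
        have harg : (w - (k:ℕ) * d) - (w - ((k:ℕ)+1:ℕ) * d) = d := by push_cast; ring
        rw [harg] at hstep
        calc Fw * (1 - ρ * d) ^ (k+1) = (Fw * (1 - ρ * d) ^ k) * (1 - ρ * d) := by ring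
          _ ≤ (∫ s in Set.Iio (w - k * d), f s) * (1 - ρ * d) := by
              apply mul_le_mul_of_nonneg_right (ih hk)
              linarith
          _ ≤ ∫ s in Set.Iio (w - ((k:ℕ)+1:ℕ) * d), f s := hstep
    have hkey := key n le_rfl
    have hend : w - (n:ℝ) * d = z := by rw [hd]; field_simp; ring
    rw [hend] at hkey
    rw [div_eq_mul_inv, ht0]
    rw [div_eq_mul_inv, ht0] at htd
    rw [htd]
    exact hkey

end Exp


/-- If `f` is measurable, log-concave, and integrable on every
`(−∞, z)`, then `F z = ∫_{(−∞,z)} f` is log-concave. -/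
theorem stmt_1 (f : ℝ → ℝ) (hmeas : Measurable f)
    (hnonneg : ∀ x, 0 ≤ f x)
    (hlc : ∀ x y t : ℝ, 0 ≤ t → t ≤ 1 →
      f x ^ (1 - t) * f y ^ t ≤ f ((1 - t) * x + t * y))
    (hint : ∀ z : ℝ, IntegrableOn f (Set.Iio z)) :
    ∀ x y t : ℝ, 0 ≤ t → t ≤ 1 →
      (∫ s in Set.Iio x, f s) ^ (1 - t) * (∫ s in Set.Iio y, f s) ^ t ≤
        ∫ s in Set.Iio ((1 - t) * x + t * y), f s := by
  intro x y t ht0 ht1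
  set z := (1 - t) * x + t * y with hz
  set Fx := ∫ s in Set.Iio x, f s with hFx
  set Fy := ∫ s in Set.Iio y, f s with hFy
  set Fz := ∫ s in Set.Iio z, f s with hFz
  have hFx0 : 0 ≤ Fx := setIntegral_nonneg measurableSet_Iio fun s _ => hnonneg s
  have hFy0 : 0 ≤ Fy := setIntegral_nonneg measurableSet_Iio fun s _ => hnonneg s
  have hFz0 : 0 ≤ Fz := setIntegral_nonneg measurableSet_Iio fun s _ => hnonneg s
  rcases hFz0.lt_or_eq with hFzpos | hFzzero
  · -- main case : Fz > 0
    set ρ := f z / Fz with hρ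
    have hX : Fx * Real.exp (ρ * (z - x)) ≤ Fz := exp_bound hmeas hnonneg hlc hint hFzpos x
    have hY : Fy * Real.exp (ρ * (z - y)) ≤ Fz := exp_bound hmeas hnonneg hlc hint hFzpos y
    have hX' : Fx ≤ Fz * Real.exp (ρ * (x - z)) := by
      have h := mul_le_mul_of_nonneg_right hX (Real.exp_pos (ρ * (x - z))).le
      rwa [mul_assoc, ← Real.exp_add, show ρ * (z - x) + ρ * (x - z) = 0 by ring,
        Real.exp_zero, mul_one] at h
    have hY' : Fy ≤ Fz * Real.exp (ρ * (y - z)) := by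
      have h := mul_le_mul_of_nonneg_right hY (Real.exp_pos (ρ * (y - z))).le
      rwa [mul_assoc, ← Real.exp_add, show ρ * (z - y) + ρ * (y - z) = 0 by ring,
        Real.exp_zero, mul_one] at h
    calc Fx ^ (1 - t) * Fy ^ t
        ≤ (Fz * Real.exp (ρ * (x - z))) ^ (1 - t) * (Fz * Real.exp (ρ * (y - z))) ^ t := by
          apply mul_le_mul (Real.rpow_le_rpow hFx0 hX' (by linarith))
            (Real.rpow_le_rpow hFy0 hY' ht0) (Real.rpow_nonneg hFy0 t)
            (Real.rpow_nonneg (mul_nonneg hFzpos.le (Real.exp_pos _).le) _)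
      _ = Fz := by
          rw [Real.mul_rpow hFzpos.le (Real.exp_pos _).le,
            Real.mul_rpow hFzpos.le (Real.exp_pos _).le,
            ← Real.exp_mul, ← Real.exp_mul, mul_mul_mul_comm,
            ← Real.rpow_add hFzpos, ← Real.exp_add,
            show (1 - t) + t = (1:ℝ) by ring, Real.rpow_one,
            show ρ * (x - z) * (1 - t) + ρ * (y - z) * t = 0 by rw [hz]; ring,
            Real.exp_zero, mul_one]
  · -- degenerate case : Fz = 0
    rw [← hFzzero]
    rcases eq_or_lt_of_le ht0 with rfl | ht0'
    · -- t = 0 : z = x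
      have hx : z = x := by rw [hz]; ring
      rw [Real.rpow_zero, mul_one, sub_zero, Real.rpow_one, hFx, ← hx, ← hFz, ← hFzzero]
    rcases eq_or_lt_of_le ht1 with rfl | ht1'
    · -- t = 1 : z = y
      have hy : z = y := by rw [hz]; ring
      rw [sub_self, Real.rpow_zero, one_mul, Real.rpow_one, hFy, ← hy, ← hFz, ← hFzzero]
    -- 0 < t < 1
    rcases le_total x y with hxy | hyx
    · have hxz : x ≤ z := by rw [hz]; nlinarith
      have : Fx = 0 := le_antisymm (by rw [hFzzero]; exact F_mono hnonneg hint hxz) hFx0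
      rw [this, Real.zero_rpow (by linarith), zero_mul]
    · have hyz : y ≤ z := by rw [hz]; nlinarith
      have : Fy = 0 := le_antisymm (by rw [hFzzero]; exact F_mono hnonneg hint hyz) hFy0
      rw [this, Real.zero_rpow (by positivity), mul_zero]
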